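/- Let N ≥ 2 be an integer, α > 0, σ > 0, and β = σ·√(2(1+α)·log N). For any real number q with 0 ≤ q ≤ 1, the quantity (1 − N·√(2/π)·(σ/β)·exp(−β²/(2σ²)))·q is at most 1 − 1/(N^α·√(π(1+α)·log N)). In particular, the success-probability lower bound (9) of the paper's Theorem 2 never exceeds the success probability (5) of Ben-Haim et al.'s Theorem 1. -/

import Mathlib

open Real

/-- The paper's analytical comparison in Section III: with `β = σ√(2(1+α)log N)` and any
`q ∈ [0,1]` (standing for the second factor of the bound (9) of Theorem 2),
`(1 − N·√(2/π)·(σ/β)·exp(−β²/(2σ²)))·q ≤ 1 − 1/(N^α·√(π(1+α)·log N))`;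
i.e. the success-probability lower bound (9) never exceeds the bound (5) of
Ben-Haim et al.'s Theorem 1. -/
theorem bound_comparison (N : ℕ) (hN : 2 ≤ N) (α σ : ℝ) (hα : 0 < α) (hσ : 0 < σ)
    (β : ℝ) (hβ : β = σ * Real.sqrt (2 * (1 + α) * Real.log N))
    (q : ℝ) (hq0 : 0 ≤ q) (hq1 : q ≤ 1) :
    (1 - (N : ℝ) * Real.sqrt (2 / Real.pi) * (σ / β) * Real.exp (-β ^ 2 / (2 * σ ^ 2))) * q
      ≤ 1 - 1 / ((N : ℝ) ^ α * Real.sqrt (Real.pi * (1 + α) * Real.log N)) := by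
  have hN1 : (1:ℝ) < N := by exact_mod_cast lt_of_lt_of_le one_lt_two (by exact_mod_cast hN)
  have hNpos : (0:ℝ) < N := by linarith
  have hL : 0 < Real.log N := Real.log_pos hN1
  set L := Real.log N with hLdef
  have h1α : (0:ℝ) < 1 + α := by linarith
  have hπ := Real.pi_pos
  have harg : 0 < 2 * (1 + α) * L := by positivity
  have hs : 0 < Real.sqrt (2 * (1 + α) * L) := Real.sqrt_pos.mpr harg
  have hβsq : β ^ 2 = σ ^ 2 * (2 * (1 + α) * L) := by
    rw [hβ, mul_pow, Real.sq_sqrt harg.le]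
  have hexp : Real.exp (-β ^ 2 / (2 * σ ^ 2)) = (N:ℝ) ^ (-(1+α)) := by
    rw [hβsq]
    have h1 : -(σ ^ 2 * (2 * (1 + α) * L)) / (2 * σ ^ 2) = (-(1+α)) * L := by
      field_simp
    rw [h1, Real.rpow_def_of_pos hNpos]
    ring_nf
    rfl
  have hX : (N : ℝ) * Real.sqrt (2 / Real.pi) * (σ / β) * Real.exp (-β ^ 2 / (2 * σ ^ 2))
      = 1 / ((N : ℝ) ^ α * Real.sqrt (Real.pi * (1 + α) * L)) := by
    rw [hexp, hβ]
    have hσβ : σ / (σ * Real.sqrt (2 * (1 + α) * L)) = 1 / Real.sqrt (2 * (1 + α) * L) := by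
      field_simp
    rw [hσβ]
    have hNN : (N : ℝ) * (N:ℝ) ^ (-(1+α)) = ((N:ℝ) ^ α)⁻¹ := by
      have : (N : ℝ) * (N:ℝ) ^ (-(1+α)) = (N:ℝ) ^ (1 + -(1+α)) := by
        rw [Real.rpow_add hNpos, Real.rpow_one]
      rw [this]
      have : (1 : ℝ) + -(1+α) = -α := by ring
      rw [this, Real.rpow_neg hNpos.le]
    have hsq : Real.sqrt (2 / Real.pi) / Real.sqrt (2 * (1 + α) * L)
        = (Real.sqrt (Real.pi * (1 + α) * L))⁻¹ := by
      rw [← Real.sqrt_div (by positivity : (0:ℝ) ≤ 2 / Real.pi)]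
      have : (2 / Real.pi) / (2 * (1 + α) * L) = (Real.pi * (1 + α) * L)⁻¹ := by
        field_simp
      rw [this, Real.sqrt_inv]
    calc (N : ℝ) * Real.sqrt (2 / Real.pi) * (1 / Real.sqrt (2 * (1 + α) * L)) *
          (N:ℝ) ^ (-(1+α))
        = ((N : ℝ) * (N:ℝ) ^ (-(1+α))) *
          (Real.sqrt (2 / Real.pi) / Real.sqrt (2 * (1 + α) * L)) := by ring
      _ = ((N:ℝ) ^ α)⁻¹ * (Real.sqrt (Real.pi * (1 + α) * L))⁻¹ := by rw [hNN, hsq]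
      _ = 1 / ((N : ℝ) ^ α * Real.sqrt (Real.pi * (1 + α) * L)) := by
          rw [← mul_inv, one_div]
  rw [hX]
  have hY : 1 / ((N : ℝ) ^ α * Real.sqrt (Real.pi * (1 + α) * L)) ≤ 1 := by
    apply div_le_one_of_le₀ _ (by positivity)
    have h1 : (1:ℝ) ≤ (N:ℝ) ^ α := Real.one_le_rpow hN1.le hα.le
    have hlog2 : (0.6931471803 : ℝ) < L := by
      calc (0.6931471803 : ℝ) < Real.log 2 := Real.log_two_gt_d9
        _ ≤ L := Real.log_le_log (by norm_num) (by exact_mod_cast hN)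
    have h3 : (3:ℝ) < Real.pi := Real.pi_gt_three
    have h2 : (1:ℝ) ≤ Real.sqrt (Real.pi * (1 + α) * L) := by
      have := Real.sqrt_le_sqrt (show (1:ℝ) ≤ Real.pi * (1 + α) * L by nlinarith)
      rwa [Real.sqrt_one] at this
    nlinarith [Real.sqrt_nonneg (Real.pi * (1 + α) * L)]
  nlinarith
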